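/- A countable discrete group G admits an amenable action by homeomorphisms on some compact metrizable space if and only if the canonical action of G on its Stone–Čech compactification βG is amenable. -/

import Mathlib

open MeasureTheory Filter Topology

/-- The space `P(G)` of probability measures on a (countable discrete) group `G`,
viewed inside `ℓ¹(G)`; it carries the weak topology (of pointwise convergence),
which on `P(G)` coincides with the `ℓ¹`-norm topology. -/
abbrev ProbOn (G : Type) : Type :=
  {f : G → ℝ // (∀ g : G, 0 ≤ f g) ∧ HasSum f 1}

/-- The left translation action of `G` on `P(G)`: `(g • p) h = p (g⁻¹ h)`. -/
noncomputable instance ProbOn.instSMul (G : Type) [Group G] : SMul G (ProbOn G) where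
  smul g p := ⟨fun h => p.1 (g⁻¹ * h), fun h => p.2.1 _, by
    have := ((Equiv.mulLeft g⁻¹).hasSum_iff (f := p.1) (a := 1)).mpr p.2.2
    first
      | exact this
      | simpa [Function.comp_def] using this⟩

/-- The `ℓ¹` distance between two elements of `P(G)`. -/
noncomputable def l1dist {G : Type} (p q : ProbOn G) : ℝ :=
  ∑' g : G, |p.1 g - q.1 g|

/-- An action of a (discrete) group `G` by homeomorphisms on a topological space `X` is
amenable if there is a sequence of continuous maps `bⁿ : X → P(G)` such that for every
`g ∈ G`, `lim_n sup_{x ∈ X} ‖g • bⁿ_x − bⁿ_{g•x}‖₁ = 0`. -/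
def AmenableActionOn (G : Type) [Group G] (X : Type) [TopologicalSpace X]
    [MulAction G X] : Prop :=
  (∀ g : G, Continuous fun x : X => g • x) ∧
  ∃ b : ℕ → C(X, ProbOn G), ∀ g : G,
    Tendsto (fun n : ℕ => ⨆ x : X, l1dist (g • (b n) x) ((b n) (g • x)))
      atTop (𝓝 0)

/-- A group `G` is amenable at infinity (topologically amenable) if it admits an amenable
action on some nonempty compact Hausdorff space. -/
def AmenableAtInfinity (G : Type) [Group G] : Prop :=
  ∃ (X : Type) (tX : TopologicalSpace X) (aX : MulAction G X),
    @CompactSpace X tX ∧ @T2Space X tX ∧ Nonempty X ∧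
      @AmenableActionOn G _ X tX aX

/-- The canonical extension to `βG` of left translation by `g`. -/
noncomputable def stoneCechTranslate (G : Type) [Group G] [TopologicalSpace G]
    [DiscreteTopology G] (g : G) : StoneCech G → StoneCech G :=
  stoneCechExtend
    (continuous_of_discreteTopology :
      Continuous fun x : G => stoneCechUnit (g * x))

/-! ### Auxiliary lemmas -/

lemma l1dist_nonneg {G : Type} (p q : ProbOn G) : 0 ≤ l1dist p q :=
  tsum_nonneg fun _ => abs_nonneg _

lemma l1dist_le_two {G : Type} (p q : ProbOn G) : l1dist p q ≤ 2 := by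
  have hp : Summable p.1 := p.2.2.summable
  have hq : Summable q.1 := q.2.2.summable
  have hs : Summable fun g => |p.1 g - q.1 g| := (hp.sub hq).abs
  have h1 : l1dist p q ≤ ∑' g, (p.1 g + q.1 g) := by
    refine Summable.tsum_le_tsum (fun g => ?_) hs (hp.add hq)
    calc |p.1 g - q.1 g| ≤ |p.1 g| + |q.1 g| := abs_sub _ _
      _ = p.1 g + q.1 g := by rw [abs_of_nonneg (p.2.1 g), abs_of_nonneg (q.2.1 g)]
  calc l1dist p q ≤ ∑' g, (p.1 g + q.1 g) := h1
    _ = (∑' g, p.1 g) + ∑' g, q.1 g := Summable.tsum_add hp hq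
    _ = 2 := by rw [p.2.2.tsum_eq, q.2.2.tsum_eq]; norm_num

lemma l1dist_bddAbove {G : Type} {ι : Sort*} (p q : ι → ProbOn G) :
    BddAbove (Set.range fun i => l1dist (p i) (q i)) := by
  refine ⟨2, ?_⟩
  rintro _ ⟨i, rfl⟩
  exact l1dist_le_two _ _

variable {G : Type} [Group G] [TopologicalSpace G] [DiscreteTopology G]

lemma stoneCechTranslate_unit (g s : G) :
    stoneCechTranslate G g (stoneCechUnit s) = stoneCechUnit (g * s) :=
  congrFun (stoneCechExtend_extends _) s

lemma continuous_stoneCechTranslate (g : G) : Continuous (stoneCechTranslate G g) :=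
  continuous_stoneCechExtend _

lemma stoneCechTranslate_comp (k g : G) (y : StoneCech G) :
    stoneCechTranslate G k (stoneCechTranslate G g y) = stoneCechTranslate G (k * g) y := by
  have h : (stoneCechTranslate G k ∘ stoneCechTranslate G g) = stoneCechTranslate G (k * g) := by
    apply stoneCech_hom_ext
      ((continuous_stoneCechTranslate k).comp (continuous_stoneCechTranslate g))
      (continuous_stoneCechTranslate (k * g))
    funext s
    simp only [Function.comp_apply, stoneCechTranslate_unit, mul_assoc]
  exact congrFun h y

/-- The countable-product version of `metrizableSpace_pi`. -/
lemma metrizableSpace_pi_countable {ι : Type} [Countable ι] {F : ι → Type*}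
    [∀ i, TopologicalSpace (F i)] [∀ i, TopologicalSpace.MetrizableSpace (F i)] :
    TopologicalSpace.MetrizableSpace (∀ i, F i) := by
  letI := fun i => TopologicalSpace.metrizableSpaceMetric (F i)
  haveI : Encodable ι := Encodable.ofCountable ι
  letI := PiCountable.metricSpace (F := F)
  infer_instance

/-- A countable discrete group `G` admits an amenable action by homeomorphisms on some
compact metrizable space if and only if the canonical action of `G` on its Stone–Čech
compactification `βG` is amenable. -/
theorem amenable_action_on_compact_metrizable_iff_stoneCech_action_amenable
    (G : Type) [Group G] [Countable G] [TopologicalSpace G] [DiscreteTopology G] :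
    (∃ (X : Type) (tX : TopologicalSpace X) (aX : MulAction G X),
      @CompactSpace X tX ∧ @TopologicalSpace.MetrizableSpace X tX ∧ Nonempty X ∧
        @AmenableActionOn G _ X tX aX) ↔
    (∃ b : ℕ → C(StoneCech G, ProbOn G), ∀ g : G,
      Tendsto
        (fun n : ℕ =>
          ⨆ x : StoneCech G, l1dist (g • (b n) x) ((b n) (stoneCechTranslate G g x)))
        atTop (𝓝 0)) := by
  haveI : Nonempty (StoneCech G) := ⟨stoneCechUnit 1⟩
  constructor
  · -- Forward direction
    rintro ⟨X, tX, aX, hcomp, hmetr, hne, hcont, b, hb⟩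
    obtain ⟨x₀⟩ := hne
    have hf : Continuous fun s : G => s • x₀ := continuous_of_discreteTopology
    set φ : StoneCech G → X := stoneCechExtend hf with hφdef
    have hφc : Continuous φ := continuous_stoneCechExtend hf
    have hφ : ∀ (g : G) (y : StoneCech G), φ (stoneCechTranslate G g y) = g • φ y := by
      intro g
      have h : (φ ∘ stoneCechTranslate G g) = (fun y => g • φ y) := by
        apply stoneCech_hom_ext (hφc.comp (continuous_stoneCechTranslate g))
          ((hcont g).comp hφc)
        funext s
        simp only [Function.comp_apply, stoneCechTranslate_unit]
        have h1 : φ (stoneCechUnit (g * s)) = (g * s) • x₀ :=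
          congrFun (stoneCechExtend_extends hf) (g * s)
        have h2 : φ (stoneCechUnit s) = s • x₀ :=
          congrFun (stoneCechExtend_extends hf) s
        rw [h1, h2, mul_smul]
      exact fun y => congrFun h y
    refine ⟨fun n => (b n).comp ⟨φ, hφc⟩, fun g => ?_⟩
    refine squeeze_zero (fun n => ?_) (fun n => ?_) (hb g)
    · exact le_ciSup_of_le (l1dist_bddAbove _ _) (Classical.arbitrary _)
        (l1dist_nonneg _ _)
    · refine ciSup_le fun y => ?_
      simp only [ContinuousMap.comp_apply, ContinuousMap.coe_mk, hφ g y]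
      exact le_ciSup (l1dist_bddAbove (fun x : X => g • (b n) x)
        (fun x : X => (b n) (g • x))) (φ y)
  · -- Backward direction
    rintro ⟨b, hb⟩
    -- the ambient compact metrizable space
    let Z : Type := (ℕ × G) → ProbOn G
    let π : StoneCech G → Z := fun y p => b p.1 (stoneCechTranslate G p.2 y)
    have hπc : Continuous π := by
      refine continuous_pi fun p => ?_
      exact (b p.1).continuous.comp (continuous_stoneCechTranslate p.2)
    -- the action on Z by permuting coordinates
    letI : SMul G Z := ⟨fun g z p => z (p.1, p.2 * g)⟩
    have hsmul : ∀ (g : G) (z : Z) (p : ℕ × G), (g • z) p = z (p.1, p.2 * g) := fun _ _ _ => rfl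
    letI aZ : MulAction G Z :=
      { one_smul := fun z => by funext p; simp [hsmul]
        mul_smul := fun g h z => by funext p; simp [hsmul, mul_assoc] }
    have hπ_equiv : ∀ (g : G) (y : StoneCech G), π (stoneCechTranslate G g y) = g • π y := by
      intro g y
      funext p
      exact congrArg (b p.1) (stoneCechTranslate_comp p.2 g y)
    -- the space X
    let X : Type := {z : Z // z ∈ Set.range π}
    have hXinv : ∀ (g : G) (x : X), g • x.1 ∈ Set.range π := by
      rintro g ⟨z, y, rfl⟩
      exact ⟨stoneCechTranslate G g y, hπ_equiv g y⟩
    letI : SMul G X := ⟨fun g x => ⟨g • x.1, hXinv g x⟩⟩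
    letI aX : MulAction G X :=
      { one_smul := fun x => Subtype.ext (one_smul G x.1)
        mul_smul := fun g h x => Subtype.ext (mul_smul g h x.1) }
    haveI : CompactSpace X := isCompact_iff_compactSpace.mp (isCompact_range hπc)
    haveI hPmet : TopologicalSpace.MetrizableSpace (ProbOn G) := by
      haveI : TopologicalSpace.MetrizableSpace (G → ℝ) := metrizableSpace_pi_countable
      exact IsEmbedding.subtypeVal.metrizableSpace
    haveI : TopologicalSpace.MetrizableSpace Z := metrizableSpace_pi_countable
    haveI : TopologicalSpace.MetrizableSpace X := IsEmbedding.subtypeVal.metrizableSpace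
    haveI : Nonempty X := ⟨⟨π (stoneCechUnit 1), Set.mem_range_self _⟩⟩
    refine ⟨X, inferInstance, aX, inferInstance, inferInstance, inferInstance,
      ?_, ?_⟩
    · -- continuity of the action
      intro g
      refine Continuous.subtype_mk ?_ _
      refine continuous_pi fun p => ?_
      exact (continuous_apply (p.1, p.2 * g)).comp continuous_subtype_val
    · -- the maps c n and the estimate
      refine ⟨fun n => ⟨fun x => x.1 (n, 1),
        (continuous_apply ((n : ℕ), (1 : G))).comp continuous_subtype_val⟩, fun g => ?_⟩
      refine squeeze_zero (fun n => ?_) (fun n => ?_) (hb g)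
      · exact le_ciSup_of_le (l1dist_bddAbove _ _) (Classical.arbitrary _)
          (l1dist_nonneg _ _)
      · refine ciSup_le fun x => ?_
        obtain ⟨z, y, rfl⟩ := x
        simp only [ContinuousMap.coe_mk]
        have h1 : π y (n, (1 : G)) = b n (stoneCechTranslate G 1 y) := rfl
        have h2 : ((g • (⟨π y, ⟨y, rfl⟩⟩ : X)).1) (n, (1 : G))
            = b n (stoneCechTranslate G g (stoneCechTranslate G 1 y)) := by
          show b n (stoneCechTranslate G (1 * g) y) = _
          rw [stoneCechTranslate_comp, mul_one, one_mul]
        rw [h1, h2]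
        exact le_ciSup (l1dist_bddAbove (fun y : StoneCech G => g • b n y)
          (fun y : StoneCech G => b n (stoneCechTranslate G g y)))
          (stoneCechTranslate G 1 y)
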